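/- Let p be an odd prime, l ≥ 1, q = p^l, and α, β ∈ F_{q^2} with γ = β + β^q. Suppose p_{α,β}(t) = t^{q+1} + α^q·t^q + α·t + γ has q+1 distinct roots σ_0, …, σ_q in F_{q^2}, and set P_k = Σ_{i=0}^{q} σ_i^k. Then α^{q+1} − γ ≠ 0, and for every natural number k, the coefficient of t^q in the remainder of t^k upon division by p_{α,β}(t) equals (α^q·P_k + P_{k+1})/(α^{q+1} − γ). -/

import Mathlib

open Polynomial

/-- The coefficient of `t^q` in the remainder of `t^k` modulo `p_{α,β}(t)` equals
`(α^q P_k + P_{k+1}) / (α^{q+1} - γ)`, where `γ = β + β^q` and `P_k` are the power sums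
of the `q+1` distinct roots of `p_{α,β}`; in particular `α^{q+1} - γ ≠ 0`. -/
theorem remainder_top_coefficient (p l q : ℕ) (hp : p.Prime) (hodd : Odd p) (hl : 1 ≤ l)
    (hq : q = p ^ l) (F : Type*) [Field F] [Fintype F] (hF : Fintype.card F = q ^ 2)
    (α β : F) (σ : Fin (q + 1) → F) (hσinj : Function.Injective σ)
    (hσroot : ∀ i, (σ i) ^ (q + 1) + α ^ q * (σ i) ^ q + α * (σ i) + (β + β ^ q) = 0) :
    α ^ (q + 1) - (β + β ^ q) ≠ 0 ∧
    ∀ k : ℕ,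
      ((X ^ k : F[X]) %ₘ
          (X ^ (q + 1) + C (α ^ q) * X ^ q + C α * X + C (β + β ^ q))).coeff q =
        (α ^ q * (∑ i, σ i ^ k) + ∑ i, σ i ^ (k + 1)) / (α ^ (q + 1) - (β + β ^ q)) := by
  classical
  have hp' : Fact p.Prime := ⟨hp⟩
  have hq2 : 2 ≤ q := by
    rw [hq]
    calc 2 ≤ p := hp.two_le
      _ ≤ p ^ l := Nat.le_self_pow (by omega) p
  -- characteristic
  have hpF : (p : F) = 0 := by
    have h0 : ((p : F)) ^ (2 * l) = 0 := by
      rw [← Nat.cast_pow]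
      have : p ^ (2 * l) = Fintype.card F := by rw [hF, hq, ← pow_mul, mul_comm]
      rw [this, Nat.cast_card_eq_zero]
    exact pow_eq_zero_iff (by omega) |>.mp h0
  have hchar : CharP F p := (CharP.charP_iff_prime_eq_zero hp).2 hpF
  have hqF : (q : F) = 0 := by
    rw [hq, Nat.cast_pow, hpF, zero_pow (by omega)]
  have hfrob : ∀ x y : F, (x + y) ^ q = x ^ q + y ^ q := fun x y => by
    rw [hq]; exact add_pow_char_pow ..
  have hαq : (α ^ q) ^ q = α := by
    have h := FiniteField.pow_card α
    rw [hF] at h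
    rw [← pow_mul, show q * q = q ^ 2 by ring]
    exact h
  have hkey : ∀ x : F, (x + α ^ q) ^ (q + 1) =
      (x ^ (q + 1) + α ^ q * x ^ q + α * x + (β + β ^ q)) + (α ^ (q + 1) - (β + β ^ q)) := by
    intro x
    have h1 : (x + α ^ q) ^ q = x ^ q + α := by rw [hfrob, hαq]
    calc (x + α ^ q) ^ (q + 1) = (x ^ q + α) * (x + α ^ q) := by rw [pow_succ, h1]
      _ = _ := by ring
  -- part 1
  have hD : α ^ (q + 1) - (β + β ^ q) ≠ 0 := by
    intro h0
    have hroots : ∀ i, σ i = -(α ^ q) := by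
      intro i
      have h2 := hkey (σ i)
      rw [hσroot i, h0, add_zero] at h2
      have h3 := pow_eq_zero_iff (n := q + 1) (by omega) |>.mp h2
      exact eq_neg_of_add_eq_zero_left h3
    have h01 : (⟨0, by omega⟩ : Fin (q + 1)) = ⟨1, by omega⟩ :=
      hσinj (by rw [hroots, hroots])
    have h02 := congrArg Fin.val h01
    simp at h02
  refine ⟨hD, ?_⟩
  set γ := β + β ^ q with hγ
  set P : F[X] := X ^ (q + 1) + C (α ^ q) * X ^ q + C α * X + C γ with hPdef
  have hrw : P = X ^ (q + 1) + (C (α ^ q) * X ^ q + C α * X + C γ) := by ring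
  have hTdeg : (C (α ^ q) * X ^ q + C α * X + C γ).degree < ((q + 1 : ℕ) : WithBot ℕ) := by
    have h1 : (C (α ^ q) * X ^ q).degree ≤ (q : WithBot ℕ) := degree_C_mul_X_pow_le q (α ^ q)
    have h2 : (C α * X).degree ≤ (q : WithBot ℕ) :=
      (degree_C_mul_X_le α).trans (by exact_mod_cast Nat.one_le_iff_ne_zero.mpr (by omega))
    have h3 : (C γ).degree ≤ (q : WithBot ℕ) :=
      degree_C_le.trans (by exact_mod_cast Nat.zero_le q)
    have h4 := (degree_add_le (C (α ^ q) * X ^ q + C α * X) (C γ)).trans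
      (max_le ((degree_add_le (C (α ^ q) * X ^ q) (C α * X)).trans (max_le h1 h2)) h3)
    exact lt_of_le_of_lt h4 (by exact_mod_cast Nat.lt_succ_self q)
  have hPmonic : P.Monic := by
    rw [hrw]; exact monic_X_pow_add hTdeg
  have hPne : P ≠ 0 := hPmonic.ne_zero
  have hcard : (Finset.univ : Finset (Fin (q + 1))).card = q + 1 := by simp
  have hinjOn : Set.InjOn σ ↑(Finset.univ : Finset (Fin (q + 1))) :=
    fun a _ b _ h => hσinj h
  have hPdeg : P.degree = (q + 1 : ℕ) := by
    rw [hrw, degree_add_eq_left_of_degree_lt (by rwa [degree_X_pow]), degree_X_pow]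
  have hPeval : ∀ i, P.eval (σ i) = 0 := by
    intro i
    simp only [hPdef, eval_add, eval_mul, eval_pow, eval_X, eval_C]
    exact hσroot i
  have hnodal : P = Lagrange.nodal Finset.univ σ := by
    apply Polynomial.eq_of_degree_sub_lt_of_eval_index_eq _ hinjOn
    · rw [hcard]
      calc (P - Lagrange.nodal Finset.univ σ).degree < P.degree := by
            apply degree_sub_lt _ hPne
            · rw [hPmonic.leadingCoeff, (Lagrange.nodal_monic).leadingCoeff]
            · rw [hPdeg, Lagrange.degree_nodal, hcard]
        _ = _ := hPdeg
    · intro i _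
      rw [hPeval i, Lagrange.eval_nodal_at_node (Finset.mem_univ i)]
  -- factors nonzero
  have hprod : ∀ i, (σ i ^ q + α) * (σ i + α ^ q) = α ^ (q + 1) - γ := by
    intro i
    linear_combination hσroot i
  have hfac1 : ∀ i, σ i ^ q + α ≠ 0 := by
    intro i h0
    apply hD; rw [← hprod i, h0, zero_mul]
  -- derivative evaluation
  have hderiv : ∀ i, (Polynomial.derivative P).eval (σ i) = σ i ^ q + α := by
    intro i
    have hd : Polynomial.derivative P =
        C ((q : F) + 1) * X ^ q + C (α ^ q) * (C (q : F) * X ^ (q - 1)) + C α := by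
      simp only [hPdef, derivative_add, derivative_mul, derivative_C, derivative_X,
        derivative_X_pow, zero_mul, mul_one, zero_add, add_zero, mul_zero]
      push_cast
      ring_nf
    rw [hd, hqF]
    simp
  have hweight : ∀ i, Lagrange.nodalWeight Finset.univ σ i = (σ i ^ q + α)⁻¹ := by
    intro i
    rw [Lagrange.nodalWeight_eq_eval_derivative_nodal (Finset.mem_univ i), ← hnodal, hderiv i]
  -- basis coefficient
  have hbc : ∀ i, (Lagrange.basis Finset.univ σ i).coeff q =
      Lagrange.nodalWeight Finset.univ σ i := by
    intro i
    have hnd : (Lagrange.basis Finset.univ σ i).natDegree = q := by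
      rw [Lagrange.natDegree_basis hinjOn (Finset.mem_univ i), hcard]
      omega
    have hlc : (Lagrange.basis Finset.univ σ i).coeff q =
        (Lagrange.basis Finset.univ σ i).leadingCoeff := by
      rw [← Polynomial.coeff_natDegree, hnd]
    rw [hlc]
    rw [Lagrange.basis, Polynomial.leadingCoeff_prod, Lagrange.nodalWeight]
    apply Finset.prod_congr rfl
    intro j _
    rw [Lagrange.basisDivisor, leadingCoeff_mul, leadingCoeff_C, leadingCoeff_X_sub_C, mul_one]
  intro k
  set r : F[X] := X ^ k %ₘ P with hrdef
  have hrdeg : r.degree < ((Finset.univ : Finset (Fin (q + 1))).card : ℕ) := by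
    rw [hcard]
    calc r.degree < P.degree := degree_modByMonic_lt _ hPmonic
      _ = (q + 1 : ℕ) := hPdeg
  have hreval : ∀ i ∈ (Finset.univ : Finset (Fin (q + 1))), r.eval (σ i) = σ i ^ k := by
    intro i _
    rw [hrdef, modByMonic_eq_sub_mul_div]
    simp [hPeval i]
  have hr : r = Lagrange.interpolate Finset.univ σ (fun i => σ i ^ k) :=
    Lagrange.eq_interpolate_of_eval_eq _ hinjOn hrdeg hreval
  rw [hr, Lagrange.interpolate_apply, Polynomial.finset_sum_coeff]
  simp only [Polynomial.coeff_C_mul, hbc, hweight]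
  have hstep : ∀ i : Fin (q + 1), σ i ^ k * (σ i ^ q + α)⁻¹ =
      (σ i ^ (k + 1) + α ^ q * σ i ^ k) / (α ^ (q + 1) - γ) := by
    intro i
    have hinv : (σ i ^ q + α)⁻¹ = (σ i + α ^ q) / (α ^ (q + 1) - γ) := by
      rw [eq_div_iff hD, ← hprod i, ← mul_assoc, inv_mul_cancel₀ (hfac1 i), one_mul]
    rw [hinv, ← mul_div_assoc]
    congr 1
    ring
  simp_rw [hstep]
  rw [← Finset.sum_div, Finset.sum_add_distrib, ← Finset.mul_sum, add_comm]
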